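/- With n₀, k₀, ω₀ ∈ (0,π), n, m, φ, k as defined (k = k₀ cos φ + m sin φ, m = (n₀+n)/(2cos(ω₀/2)), n = n₀ cos ω₀ + n₀ × k₀-term), define ω by sin(ω/2) = sin(ω₀/2)/√(1 − cos²(ω₀/2) sin²φ) with ω ∈ (0,π). Then sin ω = sin ω₀ cos φ / (1 − cos²(ω₀/2) sin²φ) and cos ω = (cos ω₀ − cos²(ω₀/2) sin²φ)/(1 − cos²(ω₀/2) sin²φ). -/

import Mathlib

open Matrix Real

/-- Levi-Civita tensor on `Fin 3`, with `eps 0 1 2 = 1`. -/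
noncomputable def eps (i j l : Fin 3) : ℝ :=
  if (i = 0 ∧ j = 1 ∧ l = 2) ∨ (i = 1 ∧ j = 2 ∧ l = 0) ∨ (i = 2 ∧ j = 0 ∧ l = 1) then 1
  else if (i = 0 ∧ j = 2 ∧ l = 1) ∨ (i = 2 ∧ j = 1 ∧ l = 0) ∨ (i = 1 ∧ j = 0 ∧ l = 2) then -1
  else 0

/-- Rotation matrix `S_i{}^j = δ_i^j cos ω + k^l ε_{li}{}^j sin ω + k_i k^j (1 - cos ω)`. -/
noncomputable def rot (ω : ℝ) (k : Fin 3 → ℝ) : Matrix (Fin 3) (Fin 3) ℝ :=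
  Matrix.of fun i j : Fin 3 =>
    (if i = j then Real.cos ω else 0) + (∑ l, k l * eps l i j) * Real.sin ω
      + k i * k j * (1 - Real.cos ω)

theorem gauge_angle_trig (ω₀ φ ω : ℝ)
    (hω₀ : ω₀ ∈ Set.Ioo 0 Real.pi)
    (hφ : φ ∈ Set.Ioo (-(Real.pi / 2)) (Real.pi / 2))
    (hω : ω ∈ Set.Ioo 0 Real.pi)
    (hhalf : Real.sin (ω / 2) =
      Real.sin (ω₀ / 2) / Real.sqrt (1 - Real.cos (ω₀ / 2) ^ 2 * Real.sin φ ^ 2)) :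
    Real.sin ω = Real.sin ω₀ * Real.cos φ / (1 - Real.cos (ω₀ / 2) ^ 2 * Real.sin φ ^ 2) ∧
    Real.cos ω = (Real.cos ω₀ - Real.cos (ω₀ / 2) ^ 2 * Real.sin φ ^ 2) /
      (1 - Real.cos (ω₀ / 2) ^ 2 * Real.sin φ ^ 2) := by
  obtain ⟨h0, h1⟩ := hω₀
  obtain ⟨h2, h3⟩ := hφ
  obtain ⟨h4, h5⟩ := hω
  set s₀ := Real.sin (ω₀ / 2) with hs₀
  set c₀ := Real.cos (ω₀ / 2) with hc₀
  set D := 1 - c₀ ^ 2 * Real.sin φ ^ 2 with hD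
  have hs₀pos : 0 < s₀ := Real.sin_pos_of_pos_of_lt_pi (by linarith) (by linarith)
  have hc₀pos : 0 < c₀ := Real.cos_pos_of_mem_Ioo ⟨by linarith [Real.pi_pos], by linarith⟩
  have hcφpos : 0 < Real.cos φ := Real.cos_pos_of_mem_Ioo ⟨h2, h3⟩
  have hpyth : s₀ ^ 2 + c₀ ^ 2 = 1 := Real.sin_sq_add_cos_sq _
  have hsinφ : Real.sin φ ^ 2 + Real.cos φ ^ 2 = 1 := Real.sin_sq_add_cos_sq _
  have hDpos : 0 < D := by nlinarith [sq_nonneg (Real.sin φ), sq_nonneg c₀]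
  have hsqD : Real.sqrt D ^ 2 = D := Real.sq_sqrt hDpos.le
  have hsqDpos : 0 < Real.sqrt D := Real.sqrt_pos.2 hDpos
  have hcoshalfpos : 0 < Real.cos (ω / 2) :=
    Real.cos_pos_of_mem_Ioo ⟨by linarith [Real.pi_pos], by linarith⟩
  have hpyth2 : Real.sin (ω / 2) ^ 2 + Real.cos (ω / 2) ^ 2 = 1 := Real.sin_sq_add_cos_sq _
  clear_value s₀ c₀ D
  have hsin2 : Real.sin (ω / 2) ^ 2 = s₀ ^ 2 / D := by
    rw [hhalf, div_pow, hsqD]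
  have hcos2 : Real.cos (ω / 2) ^ 2 = (c₀ * Real.cos φ) ^ 2 / D := by
    have h : Real.cos (ω / 2) ^ 2 = 1 - s₀ ^ 2 / D := by rw [← hsin2]; linarith
    rw [h]
    field_simp
    nlinarith
  have hcoshalf : Real.cos (ω / 2) = c₀ * Real.cos φ / Real.sqrt D := by
    have h : Real.cos (ω / 2) = Real.sqrt ((c₀ * Real.cos φ) ^ 2 / D) := by
      rw [← hcos2]; exact (Real.sqrt_sq hcoshalfpos.le).symm
    rw [h, Real.sqrt_div (sq_nonneg _), Real.sqrt_sq (by positivity)]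
  have hωeq : ω = 2 * (ω / 2) := by ring
  have hω₀eq : ω₀ = 2 * (ω₀ / 2) := by ring
  constructor
  · rw [hωeq, Real.sin_two_mul, hhalf, hcoshalf,
      hω₀eq, Real.sin_two_mul]
    have hDD : Real.sqrt D * Real.sqrt D = D := Real.mul_self_sqrt hDpos.le
    rw [eq_div_iff hDpos.ne', ← hDD]
    field_simp
    rw [hs₀, hc₀]; simp only [Real.sqrt_mul_self hsqDpos.le, Real.sqrt_sq hsqDpos.le]; ring
  · have hc : Real.cos ω = 1 - 2 * Real.sin (ω / 2) ^ 2 := by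
      have h : Real.cos ω = 2 * Real.cos (ω / 2) ^ 2 - 1 := by
        nth_rewrite 1 [hωeq]; exact Real.cos_two_mul _
      linarith
    have hc0 : Real.cos ω₀ = 1 - 2 * s₀ ^ 2 := by
      have h : Real.cos ω₀ = 2 * Real.cos (ω₀ / 2) ^ 2 - 1 := by
        nth_rewrite 1 [hω₀eq]; exact Real.cos_two_mul _
      rw [hs₀]
      linarith [Real.sin_sq_add_cos_sq (ω₀ / 2)]
    rw [hc, hsin2, hc0, eq_div_iff hDpos.ne']
    have hcan : s₀ ^ 2 / D * D = s₀ ^ 2 := div_mul_cancel₀ _ hDpos.ne'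
    linear_combination hD - 2 * hcan
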